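/- Let P be a convex polygon and for each unit vector u let b(u), c(u) be the base vertices of the (unique) triangle anchored to u. Then b and c are continuous functions from S¹ to ∂P. -/

import Mathlib

noncomputable section
open Set Real

/-- Points in the plane. -/
abbrev Pt : Type := ℝ × ℝ

/-- 2D wedge (cross) product. -/
def wedge (p q : Pt) : ℝ := p.1 * q.2 - p.2 * q.1

/-- Euclidean dot product on the plane. -/
def dotp (p q : Pt) : ℝ := p.1 * q.1 + p.2 * q.2

/-- Area of the triangle with vertices `a b c`. -/
def triArea (a b c : Pt) : ℝ := |wedge (b - a) (c - a)| / 2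

/-- `abc` is inscribed in `P`, counter-clockwise, with `u` an outer normal to the side `bc`. -/
def InscribedNormal (P : Set Pt) (u a b c : Pt) : Prop :=
  a ∈ P ∧ b ∈ P ∧ c ∈ P ∧ 0 ≤ wedge (b - a) (c - a) ∧
    dotp (c - b) u = 0 ∧ dotp a u ≤ dotp b u

/-- `abc` is anchored to `u` in `P`: it maximizes area among inscribed triangles
with `u` as outer normal to the side `bc`. -/
def Anchored (P : Set Pt) (u a b c : Pt) : Prop :=
  InscribedNormal P u a b c ∧
    ∀ a' b' c' : Pt, InscribedNormal P u a' b' c' → triArea a' b' c' ≤ triArea a b c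

/-- The base vertices `b(u)`, `c(u)` of the (unique) triangle anchored to
`u` depend continuously on the unit vector `u`. -/
def vperp (u : Pt) : Pt := (-u.2, u.1)

lemma dotp_sub_left (x y w : Pt) : dotp (x - y) w = dotp x w - dotp y w := by
  simp [dotp]; ring

lemma key_wedge (u a b c : Pt) (hu : u.1 ^ 2 + u.2 ^ 2 = 1)
    (hbc : dotp (c - b) u = 0) :
    wedge (b - a) (c - a) = dotp (b - a) u * dotp (c - b) (vperp u) := by
  simp only [dotp, wedge, vperp, Prod.fst_sub, Prod.snd_sub] at *
  linear_combination (-((b.1 - a.1) * (c.2 - a.2) - (b.2 - a.2) * (c.1 - a.1))) * hu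
    - ((b.1 - a.1) * (-u.2) + (b.2 - a.2) * u.1) * hbc

lemma decomp_perp (u x : Pt) (hu : u.1 ^ 2 + u.2 ^ 2 = 1) (hx : dotp x u = 0) :
    x.1 = dotp x (vperp u) * -u.2 ∧ x.2 = dotp x (vperp u) * u.1 := by
  simp only [dotp, vperp] at *
  constructor
  · linear_combination u.1 * hx - x.1 * hu
  · linear_combination u.2 * hx - x.2 * hu

lemma triArea_nonneg (a b c : Pt) : 0 ≤ triArea a b c := by
  unfold triArea; positivity

set_option maxHeartbeats 4000000 in
/-- Uniqueness of the base vertices of anchored triangles. -/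
lemma anchored_uniq {P : Set Pt} (hconv : Convex ℝ P) {z : Pt} {r : ℝ} (hr : 0 < r)
    (hball : Metric.ball z r ⊆ P) {u a b c a' b' c' : Pt} (hu : u.1 ^ 2 + u.2 ^ 2 = 1)
    (h : Anchored P u a b c) (h' : Anchored P u a' b' c') : b = b' ∧ c = c' := by
  obtain ⟨⟨ha, hb, hc, hwedge, hbc, hab⟩, hmax⟩ := h
  obtain ⟨⟨ha', hb', hc', hwedge', hbc', hab'⟩, hmax'⟩ := h'
  have hu1 : u.1 ^ 2 ≤ 1 := by nlinarith [sq_nonneg u.2]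
  have hu2 : u.2 ^ 2 ≤ 1 := by nlinarith [sq_nonneg u.1]
  -- area positivity via a small triangle in the ball
  have hcoord : ∀ s : ℝ, s ^ 2 ≤ 2 → |r / 2 * s| < r := by
    intro s hs
    have h2 : |s| ≤ 3 / 2 := by
      rw [abs_le]; constructor <;> nlinarith [sq_nonneg (s - 2), sq_nonneg (s + 2)]
    calc |r / 2 * s| = r / 2 * |s| := by
          rw [abs_mul, abs_of_nonneg (by linarith : (0:ℝ) ≤ r / 2)]
      _ ≤ r / 2 * (3 / 2) := by
          apply mul_le_mul_of_nonneg_left h2 (by linarith)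
      _ < r := by linarith
  have hballmem : ∀ s t : ℝ, s ^ 2 ≤ 2 → t ^ 2 ≤ 2 →
      ((z.1 + r / 2 * s, z.2 + r / 2 * t) : Pt) ∈ P := by
    intro s t hs ht
    apply hball
    simp only [Metric.mem_ball, Prod.dist_eq, Real.dist_eq, max_lt_iff]
    constructor
    · have e : z.1 + r / 2 * s - z.1 = r / 2 * s := by ring
      rw [e]; exact hcoord s hs
    · have e : z.2 + r / 2 * t - z.2 = r / 2 * t := by ring
      rw [e]; exact hcoord t ht
  have hMpos : 0 < triArea a b c := by
    set a0 : Pt := (z.1 + r / 2 * -u.1, z.2 + r / 2 * -u.2) with ha0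
    set b0 : Pt := (z.1 + r / 2 * (u.1 + u.2), z.2 + r / 2 * (u.2 - u.1)) with hb0
    set c0 : Pt := (z.1 + r / 2 * (u.1 - u.2), z.2 + r / 2 * (u.2 + u.1)) with hc0
    have hma : a0 ∈ P := hballmem (-u.1) (-u.2) (by nlinarith) (by nlinarith)
    have hmb : b0 ∈ P := hballmem (u.1 + u.2) (u.2 - u.1)
      (by nlinarith [sq_nonneg (u.1 - u.2)]) (by nlinarith [sq_nonneg (u.1 + u.2)])
    have hmc : c0 ∈ P := hballmem (u.1 - u.2) (u.2 + u.1)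
      (by nlinarith [sq_nonneg (u.1 + u.2)]) (by nlinarith [sq_nonneg (u.1 - u.2)])
    have hw0 : wedge (b0 - a0) (c0 - a0) = r ^ 2 := by
      simp only [wedge, ha0, hb0, hc0, Prod.fst_sub, Prod.snd_sub]
      linear_combination r ^ 2 * hu
    have hins0 : InscribedNormal P u a0 b0 c0 := by
      refine ⟨hma, hmb, hmc, ?_, ?_, ?_⟩
      · rw [hw0]; positivity
      · simp only [dotp, ha0, hb0, hc0, Prod.fst_sub, Prod.snd_sub]; ring
      · have e : dotp b0 u - dotp a0 u = r := by
          simp only [dotp, ha0, hb0]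
          linear_combination r * hu
        linarith
    have hle := hmax a0 b0 c0 hins0
    have harea0 : triArea a0 b0 c0 = r ^ 2 / 2 := by
      unfold triArea
      rw [hw0, abs_of_nonneg (by positivity)]
    nlinarith
  have hM' : triArea a' b' c' = triArea a b c :=
    le_antisymm (hmax a' b' c' ⟨ha', hb', hc', hwedge', hbc', hab'⟩)
      (hmax' a b c ⟨ha, hb, hc, hwedge, hbc, hab⟩)
  set H := dotp (b - a) u with hH
  set L := dotp (c - b) (vperp u) with hL
  set H' := dotp (b' - a') u with hH'
  set L' := dotp (c' - b') (vperp u) with hL'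
  have hwHL : wedge (b - a) (c - a) = H * L := key_wedge u a b c hu hbc
  have hwHL' : wedge (b' - a') (c' - a') = H' * L' := key_wedge u a' b' c' hu hbc'
  have areaHL : triArea a b c = H * L / 2 := by
    unfold triArea; rw [hwHL, abs_of_nonneg (hwHL ▸ hwedge)]
  have areaHL' : triArea a' b' c' = H' * L' / 2 := by
    unfold triArea; rw [hwHL', abs_of_nonneg (hwHL' ▸ hwedge')]
  have hHnn : 0 ≤ H := by rw [hH, dotp_sub_left]; linarith
  have hHnn' : 0 ≤ H' := by rw [hH', dotp_sub_left]; linarith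
  have hHLpos : 0 < H * L := by nlinarith
  have hHLpos' : 0 < H' * L' := by nlinarith
  have hHpos : 0 < H := by
    rcases mul_pos_iff.mp hHLpos with ⟨h1, h2⟩ | ⟨h1, h2⟩
    · exact h1
    · linarith
  have hHpos' : 0 < H' := by
    rcases mul_pos_iff.mp hHLpos' with ⟨h1, h2⟩ | ⟨h1, h2⟩
    · exact h1
    · linarith
  have hLpos : 0 < L := by
    rcases mul_pos_iff.mp hHLpos with ⟨h1, h2⟩ | ⟨h1, h2⟩
    · exact h2
    · linarith
  have hLpos' : 0 < L' := by
    rcases mul_pos_iff.mp hHLpos' with ⟨h1, h2⟩ | ⟨h1, h2⟩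
    · exact h2
    · linarith
  have heq : H' * L' = H * L := by
    have := hM'; rw [areaHL, areaHL'] at this; linarith
  -- apex minimality
  have apex_min : ∀ x ∈ P, dotp a u ≤ dotp x u := by
    intro x hx
    by_contra hlt
    push_neg at hlt
    have hxb : dotp x u ≤ dotp b u := le_trans hlt.le hab
    have hw2 := key_wedge u x b c hu hbc
    rw [← hL] at hw2
    have hH2 : H < dotp (b - x) u := by
      rw [hH, dotp_sub_left, dotp_sub_left]; linarith
    have hd0 : 0 ≤ dotp (b - x) u := by linarith
    have hins : InscribedNormal P u x b c :=
      ⟨hx, hb, hc, by rw [hw2]; exact mul_nonneg hd0 hLpos.le, hbc, hxb⟩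
    have hle := hmax x b c hins
    have e : triArea x b c = dotp (b - x) u * L / 2 := by
      unfold triArea; rw [hw2, abs_of_nonneg (mul_nonneg hd0 hLpos.le)]
    rw [e, areaHL] at hle
    nlinarith [mul_pos (show (0:ℝ) < dotp (b - x) u - H by linarith) hLpos]
  have apex_min' : ∀ x ∈ P, dotp a' u ≤ dotp x u := by
    intro x hx
    by_contra hlt
    push_neg at hlt
    have hxb : dotp x u ≤ dotp b' u := le_trans hlt.le hab'
    have hw2 := key_wedge u x b' c' hu hbc'
    rw [← hL'] at hw2
    have hH2 : H' < dotp (b' - x) u := by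
      rw [hH', dotp_sub_left, dotp_sub_left]; linarith
    have hd0 : 0 ≤ dotp (b' - x) u := by linarith
    have hins : InscribedNormal P u x b' c' :=
      ⟨hx, hb', hc', by rw [hw2]; exact mul_nonneg hd0 hLpos'.le, hbc', hxb⟩
    have hle := hmax' x b' c' hins
    have e : triArea x b' c' = dotp (b' - x) u * L' / 2 := by
      unfold triArea; rw [hw2, abs_of_nonneg (mul_nonneg hd0 hLpos'.le)]
    rw [e, areaHL'] at hle
    nlinarith [mul_pos (show (0:ℝ) < dotp (b' - x) u - H' by linarith) hLpos']
  have hs : dotp a u = dotp a' u := le_antisymm (apex_min a' ha') (apex_min' a ha)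
  -- base extremality
  have base_c : ∀ ε : ℝ, 0 < ε → ((c.1 + ε * -u.2, c.2 + ε * u.1) : Pt) ∉ P := by
    intro ε hε hmem
    have hbcx := hbc
    simp only [dotp, Prod.fst_sub, Prod.snd_sub] at hbcx
    set c2 : Pt := (c.1 + ε * -u.2, c.2 + ε * u.1) with hc2
    have hbc2 : dotp (c2 - b) u = 0 := by
      simp only [dotp, hc2, Prod.fst_sub, Prod.snd_sub]
      linear_combination hbcx
    have hL2 : dotp (c2 - b) (vperp u) = L + ε := by
      rw [hL]
      simp only [dotp, vperp, hc2, Prod.fst_sub, Prod.snd_sub]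
      linear_combination ε * hu
    have hw2 := key_wedge u a b c2 hu hbc2
    rw [hL2] at hw2
    have hLe : (0:ℝ) ≤ L + ε := by linarith
    have hins : InscribedNormal P u a b c2 :=
      ⟨ha, hb, hmem, by rw [hw2]; exact mul_nonneg hHpos.le hLe, hbc2, hab⟩
    have hle := hmax a b c2 hins
    have e : triArea a b c2 = H * (L + ε) / 2 := by
      unfold triArea; rw [hw2, abs_of_nonneg (mul_nonneg hHpos.le hLe)]
    rw [e, areaHL] at hle
    nlinarith [mul_pos hHpos hε]
  have base_b : ∀ ε : ℝ, 0 < ε → ((b.1 - ε * -u.2, b.2 - ε * u.1) : Pt) ∉ P := by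
    intro ε hε hmem
    have hbcx := hbc
    simp only [dotp, Prod.fst_sub, Prod.snd_sub] at hbcx
    set b2 : Pt := (b.1 - ε * -u.2, b.2 - ε * u.1) with hb2
    have hbc2 : dotp (c - b2) u = 0 := by
      simp only [dotp, hb2, Prod.fst_sub, Prod.snd_sub]
      linear_combination hbcx
    have hH2 : dotp (b2 - a) u = H := by
      rw [hH]
      simp only [dotp, hb2, Prod.fst_sub, Prod.snd_sub]
      ring
    have hL2 : dotp (c - b2) (vperp u) = L + ε := by
      rw [hL]
      simp only [dotp, vperp, hb2, Prod.fst_sub, Prod.snd_sub]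
      linear_combination ε * hu
    have hab2 : dotp a u ≤ dotp b2 u := by
      have e1 : dotp (b2 - a) u = dotp b2 u - dotp a u := dotp_sub_left _ _ _
      linarith [hH2, hHpos, e1.symm.trans hH2]
    have hw2 := key_wedge u a b2 c hu hbc2
    rw [hL2, hH2] at hw2
    have hLe : (0:ℝ) ≤ L + ε := by linarith
    have hins : InscribedNormal P u a b2 c :=
      ⟨ha, hmem, hc, by rw [hw2]; exact mul_nonneg hHpos.le hLe, hbc2, hab2⟩
    have hle := hmax a b2 c hins
    have e : triArea a b2 c = H * (L + ε) / 2 := by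
      unfold triArea; rw [hw2, abs_of_nonneg (mul_nonneg hHpos.le hLe)]
    rw [e, areaHL] at hle
    nlinarith [mul_pos hHpos hε]
  have base_c' : ∀ ε : ℝ, 0 < ε → ((c'.1 + ε * -u.2, c'.2 + ε * u.1) : Pt) ∉ P := by
    intro ε hε hmem
    have hbcx := hbc'
    simp only [dotp, Prod.fst_sub, Prod.snd_sub] at hbcx
    set c2 : Pt := (c'.1 + ε * -u.2, c'.2 + ε * u.1) with hc2
    have hbc2 : dotp (c2 - b') u = 0 := by
      simp only [dotp, hc2, Prod.fst_sub, Prod.snd_sub]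
      linear_combination hbcx
    have hL2 : dotp (c2 - b') (vperp u) = L' + ε := by
      rw [hL']
      simp only [dotp, vperp, hc2, Prod.fst_sub, Prod.snd_sub]
      linear_combination ε * hu
    have hw2 := key_wedge u a' b' c2 hu hbc2
    rw [hL2] at hw2
    have hLe : (0:ℝ) ≤ L' + ε := by linarith
    have hins : InscribedNormal P u a' b' c2 :=
      ⟨ha', hb', hmem, by rw [hw2]; exact mul_nonneg hHpos'.le hLe, hbc2, hab'⟩
    have hle := hmax' a' b' c2 hins
    have e : triArea a' b' c2 = H' * (L' + ε) / 2 := by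
      unfold triArea; rw [hw2, abs_of_nonneg (mul_nonneg hHpos'.le hLe)]
    rw [e, areaHL'] at hle
    nlinarith [mul_pos hHpos' hε]
  have base_b' : ∀ ε : ℝ, 0 < ε → ((b'.1 - ε * -u.2, b'.2 - ε * u.1) : Pt) ∉ P := by
    intro ε hε hmem
    have hbcx := hbc'
    simp only [dotp, Prod.fst_sub, Prod.snd_sub] at hbcx
    set b2 : Pt := (b'.1 - ε * -u.2, b'.2 - ε * u.1) with hb2
    have hbc2 : dotp (c' - b2) u = 0 := by
      simp only [dotp, hb2, Prod.fst_sub, Prod.snd_sub]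
      linear_combination hbcx
    have hH2 : dotp (b2 - a') u = H' := by
      rw [hH']
      simp only [dotp, hb2, Prod.fst_sub, Prod.snd_sub]
      ring
    have hL2 : dotp (c' - b2) (vperp u) = L' + ε := by
      rw [hL']
      simp only [dotp, vperp, hb2, Prod.fst_sub, Prod.snd_sub]
      linear_combination ε * hu
    have hab2 : dotp a' u ≤ dotp b2 u := by
      have e1 : dotp (b2 - a') u = dotp b2 u - dotp a' u := dotp_sub_left _ _ _
      linarith [hH2, hHpos', e1.symm.trans hH2]
    have hw2 := key_wedge u a' b2 c' hu hbc2
    rw [hL2, hH2] at hw2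
    have hLe : (0:ℝ) ≤ L' + ε := by linarith
    have hins : InscribedNormal P u a' b2 c' :=
      ⟨ha', hmem, hc', by rw [hw2]; exact mul_nonneg hHpos'.le hLe, hbc2, hab2⟩
    have hle := hmax' a' b2 c' hins
    have e : triArea a' b2 c' = H' * (L' + ε) / 2 := by
      unfold triArea; rw [hw2, abs_of_nonneg (mul_nonneg hHpos'.le hLe)]
    rw [e, areaHL'] at hle
    nlinarith [mul_pos hHpos' hε]
  -- midpoints stay in P
  have hmid : ∀ x y : Pt, x ∈ P → y ∈ P → (((x.1 + y.1)/2, (x.2 + y.2)/2) : Pt) ∈ P := by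
    intro x y hx hy
    have h2 := hconv hx hy (by norm_num : (0:ℝ) ≤ 1/2) (by norm_num : (0:ℝ) ≤ 1/2)
      (by norm_num : (1:ℝ)/2 + 1/2 = 1)
    have e : ((1:ℝ)/2) • x + ((1:ℝ)/2) • y = (((x.1 + y.1)/2, (x.2 + y.2)/2) : Pt) := by
      simp only [Prod.ext_iff, Prod.fst_add, Prod.snd_add, Prod.smul_fst, Prod.smul_snd,
        smul_eq_mul]
      constructor <;> ring
    rwa [e] at h2
  -- the midpoint triangle forces H = H', L = L'
  have hbcm' := hbc
  have hbcm'' := hbc'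
  simp only [dotp, Prod.fst_sub, Prod.snd_sub] at hbcm' hbcm''
  set am : Pt := ((a.1 + a'.1)/2, (a.2 + a'.2)/2) with ham
  set bm : Pt := ((b.1 + b'.1)/2, (b.2 + b'.2)/2) with hbm
  set cm : Pt := ((c.1 + c'.1)/2, (c.2 + c'.2)/2) with hcm
  have hbcm : dotp (cm - bm) u = 0 := by
    simp only [dotp, hbm, hcm, Prod.fst_sub, Prod.snd_sub]
    linear_combination hbcm' / 2 + hbcm'' / 2
  have hHm : dotp (bm - am) u = (H + H') / 2 := by
    rw [hH, hH']
    simp only [dotp, ham, hbm, Prod.fst_sub, Prod.snd_sub]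
    ring
  have hLm : dotp (cm - bm) (vperp u) = (L + L') / 2 := by
    rw [hL, hL']
    simp only [dotp, vperp, hbm, hcm, Prod.fst_sub, Prod.snd_sub]
    ring
  have habm : dotp am u ≤ dotp bm u := by
    have e1 : dotp (bm - am) u = dotp bm u - dotp am u := dotp_sub_left _ _ _
    have := e1.symm.trans hHm
    linarith
  have hwm := key_wedge u am bm cm hu hbcm
  rw [hHm, hLm] at hwm
  have hmn : (0:ℝ) ≤ (H + H') / 2 * ((L + L') / 2) := by positivity
  have hinsm : InscribedNormal P u am bm cm :=
    ⟨hmid a a' ha ha', hmid b b' hb hb', hmid c c' hc hc', by rw [hwm]; exact hmn, hbcm, habm⟩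
  have hlem := hmax am bm cm hinsm
  have em : triArea am bm cm = (H + H') / 2 * ((L + L') / 2) / 2 := by
    unfold triArea; rw [hwm, abs_of_nonneg hmn]
  rw [em, areaHL] at hlem
  have e8 : (H + H') / 2 * ((L + L') / 2) / 2 = (H*L + H*L' + H'*L + H'*L')/8 := by ring
  rw [e8] at hlem
  have hsumle : H * L' + H' * L ≤ 2 * (H * L) := by linarith [heq]
  have hHH : H' = H := by
    have e : H' * (H * L' + H' * L - 2 * (H * L)) = L * (H - H') ^ 2 := by
      linear_combination H * heq
    have h0 : 0 ≤ H' * (2 * (H * L) - (H * L' + H' * L)) :=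
      mul_nonneg hHpos'.le (by linarith)
    have h1 : L * (H - H') ^ 2 ≤ 0 := by
      calc L * (H - H') ^ 2 = H' * (H * L' + H' * L - 2 * (H * L)) := e.symm
        _ = -(H' * (2 * (H * L) - (H * L' + H' * L))) := by ring
        _ ≤ 0 := by linarith
    have h2 : (H - H') ^ 2 ≤ 0 := by
      rcases mul_nonpos_iff.mp h1 with ⟨ha1, ha2⟩ | ⟨ha1, ha2⟩
      · exact ha2
      · linarith
    have h4 : (H - H') ^ 2 = 0 := le_antisymm h2 (sq_nonneg _)
    have h3 : H - H' = 0 := pow_eq_zero_iff (by norm_num : 2 ≠ 0) |>.mp h4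
    linarith
  have hLL : L' = L := by
    rw [hHH] at heq
    exact mul_left_cancel₀ hHpos.ne' heq
  -- heights of the bases agree
  have htb : dotp b u = dotp b' u := by
    have e1 : dotp (b - a) u = dotp b u - dotp a u := dotp_sub_left _ _ _
    have e2 : dotp (b' - a') u = dotp b' u - dotp a' u := dotp_sub_left _ _ _
    rw [← hH] at e1
    rw [← hH'] at e2
    linarith [hHH]
  -- b = b'
  have hbb : b = b' := by
    have htbb : dotp (b' - b) u = 0 := by rw [dotp_sub_left]; linarith
    obtain ⟨e1, e2⟩ := decomp_perp u (b' - b) hu htbb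
    rw [Prod.fst_sub] at e1
    rw [Prod.snd_sub] at e2
    set κ := dotp (b' - b) (vperp u) with hκ
    rcases lt_trichotomy κ 0 with h0 | h0 | h0
    · exfalso
      apply base_b (-κ/2) (by linarith)
      have e : ((b.1 - -κ/2 * -u.2, b.2 - -κ/2 * u.1) : Pt)
          = ((b.1 + b'.1)/2, (b.2 + b'.2)/2) := by
        simp only [Prod.ext_iff]
        constructor
        · linarith
        · linarith
      rw [e]
      exact hmid b b' hb hb'
    · apply Prod.ext
      · rw [h0] at e1; linarith
      · rw [h0] at e2; linarith
    · exfalso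
      apply base_b' (κ/2) (by linarith)
      have e : ((b'.1 - κ/2 * -u.2, b'.2 - κ/2 * u.1) : Pt)
          = ((b.1 + b'.1)/2, (b.2 + b'.2)/2) := by
        simp only [Prod.ext_iff]
        constructor
        · linarith
        · linarith
      rw [e]
      exact hmid b b' hb hb'
  -- c = c'
  have hcc : c = c' := by
    have htc : dotp c u = dotp c' u := by
      have e1 : dotp (c - b) u = dotp c u - dotp b u := dotp_sub_left _ _ _
      have e2 : dotp (c' - b') u = dotp c' u - dotp b' u := dotp_sub_left _ _ _
      rw [hbc] at e1
      rw [hbc'] at e2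
      linarith
    have htcc : dotp (c' - c) u = 0 := by rw [dotp_sub_left]; linarith
    obtain ⟨e1, e2⟩ := decomp_perp u (c' - c) hu htcc
    rw [Prod.fst_sub] at e1
    rw [Prod.snd_sub] at e2
    set κ := dotp (c' - c) (vperp u) with hκ
    rcases lt_trichotomy κ 0 with h0 | h0 | h0
    · exfalso
      apply base_c' (-κ/2) (by linarith)
      have e : ((c'.1 + -κ/2 * -u.2, c'.2 + -κ/2 * u.1) : Pt)
          = ((c.1 + c'.1)/2, (c.2 + c'.2)/2) := by
        simp only [Prod.ext_iff]
        constructor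
        · linarith
        · linarith
      rw [e]
      exact hmid c c' hc hc'
    · apply Prod.ext
      · rw [h0] at e1; linarith
      · rw [h0] at e2; linarith
    · exfalso
      apply base_c (κ/2) (by linarith)
      have e : ((c.1 + κ/2 * -u.2, c.2 + κ/2 * u.1) : Pt)
          = ((c.1 + c'.1)/2, (c.2 + c'.2)/2) := by
        simp only [Prod.ext_iff]
        constructor
        · linarith
        · linarith
      rw [e]
      exact hmid c c' hc hc'
  exact ⟨hbb, hcc⟩

/-- rotation (about the origin) carrying the unit vector `u` to the unit vector `w`. -/
def rotP (u w x : Pt) : Pt :=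
  (dotp u w * x.1 - wedge u w * x.2, wedge u w * x.1 + dotp u w * x.2)

lemma rot_dotp (u w y : Pt) (hw : w.1 ^ 2 + w.2 ^ 2 = 1) :
    dotp (rotP u w y) w = dotp y u := by
  simp only [rotP, dotp, wedge]
  linear_combination (y.1 * u.1 + y.2 * u.2) * hw

lemma rot_wedge (u w x y : Pt) (hu : u.1 ^ 2 + u.2 ^ 2 = 1) (hw : w.1 ^ 2 + w.2 ^ 2 = 1) :
    wedge (rotP u w x) (rotP u w y) = wedge x y := by
  simp only [rotP, dotp, wedge]
  linear_combination (x.1 * y.2 - x.2 * y.1) * (w.1 ^ 2 + w.2 ^ 2) * hu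
    + (x.1 * y.2 - x.2 * y.1) * hw

lemma tendsto_fst' {α : Type*} {l : Filter α} {f : α → Pt} {x : Pt}
    (hf : Filter.Tendsto f l (nhds x)) : Filter.Tendsto (fun n => (f n).1) l (nhds x.1) :=
  (continuous_fst.tendsto x).comp hf

lemma tendsto_snd' {α : Type*} {l : Filter α} {f : α → Pt} {x : Pt}
    (hf : Filter.Tendsto f l (nhds x)) : Filter.Tendsto (fun n => (f n).2) l (nhds x.2) :=
  (continuous_snd.tendsto x).comp hf

lemma tendsto_dotp {α : Type*} {l : Filter α} {f g : α → Pt} {x y : Pt}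
    (hf : Filter.Tendsto f l (nhds x)) (hg : Filter.Tendsto g l (nhds y)) :
    Filter.Tendsto (fun n => dotp (f n) (g n)) l (nhds (dotp x y)) := by
  simp only [dotp]
  exact ((tendsto_fst' hf).mul (tendsto_fst' hg)).add ((tendsto_snd' hf).mul (tendsto_snd' hg))

lemma tendsto_wedge {α : Type*} {l : Filter α} {f g : α → Pt} {x y : Pt}
    (hf : Filter.Tendsto f l (nhds x)) (hg : Filter.Tendsto g l (nhds y)) :
    Filter.Tendsto (fun n => wedge (f n) (g n)) l (nhds (wedge x y)) := by
  simp only [wedge]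
  exact ((tendsto_fst' hf).mul (tendsto_snd' hg)).sub ((tendsto_snd' hf).mul (tendsto_fst' hg))

lemma tendsto_triArea {α : Type*} {l : Filter α} {f g h : α → Pt} {x y z : Pt}
    (hf : Filter.Tendsto f l (nhds x)) (hg : Filter.Tendsto g l (nhds y))
    (hh : Filter.Tendsto h l (nhds z)) :
    Filter.Tendsto (fun n => triArea (f n) (g n) (h n)) l (nhds (triArea x y z)) := by
  simp only [triArea]
  exact ((tendsto_wedge (hg.sub hf) (hh.sub hf)).abs).div_const 2

lemma dotp_smul_left (k : ℝ) (x w : Pt) : dotp (k • x) w = k * dotp x w := by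
  simp only [dotp, Prod.smul_fst, Prod.smul_snd, smul_eq_mul]; ring

lemma wedge_smul (k : ℝ) (x y : Pt) : wedge (k • x) (k • y) = k ^ 2 * wedge x y := by
  simp only [wedge, Prod.smul_fst, Prod.smul_snd, smul_eq_mul]; ring

lemma tendsto_rot {α : Type*} {l : Filter α} {f : α → Pt} {w0 : Pt} (u y : Pt)
    (hf : Filter.Tendsto f l (nhds w0)) :
    Filter.Tendsto (fun n => rotP u (f n) y) l (nhds (rotP u w0 y)) := by
  unfold rotP
  exact (((tendsto_dotp tendsto_const_nhds hf).mul tendsto_const_nhds).sub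
      ((tendsto_wedge tendsto_const_nhds hf).mul tendsto_const_nhds)).prodMk_nhds
    (((tendsto_wedge tendsto_const_nhds hf).mul tendsto_const_nhds).add
      ((tendsto_dotp tendsto_const_nhds hf).mul tendsto_const_nhds))

lemma rotP_id (u y : Pt) (hu : u.1 ^ 2 + u.2 ^ 2 = 1) : rotP u u y = y := by
  simp only [rotP, dotp, wedge, Prod.ext_iff]
  constructor
  · linear_combination y.1 * hu
  · linear_combination y.2 * hu

theorem stmt_9 (S : Finset Pt) (hS : ¬ Collinear ℝ (S : Set Pt))
    (P : Set Pt) (hP : P = convexHull ℝ (S : Set Pt))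
    (A B C : Pt → Pt)
    (hanch : ∀ u : Pt, u.1 ^ 2 + u.2 ^ 2 = 1 → Anchored P u (A u) (B u) (C u)) :
    ContinuousOn B {u : Pt | u.1 ^ 2 + u.2 ^ 2 = 1} ∧
      ContinuousOn C {u : Pt | u.1 ^ 2 + u.2 ^ 2 = 1} := by
  have hPc : IsCompact P := by rw [hP]; exact S.finite_toSet.isCompact_convexHull ℝ
  have hconv : Convex ℝ P := by rw [hP]; exact convex_convexHull ℝ _
  have hPcl : IsClosed P := hPc.isClosed
  have hint : (interior P).Nonempty := by
    rw [hP, interior_convexHull_nonempty_iff_affineSpan_eq_top]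
    by_contra haff
    apply hS
    have hne : (S : Set Pt).Nonempty := by
      rcases (S : Set Pt).eq_empty_or_nonempty with he | he
      · exact absurd (he ▸ collinear_empty ℝ Pt) hS
      · exact he
    rw [collinear_iff_finrank_le_one]
    have hdirne : (affineSpan ℝ (S : Set Pt)).direction ≠ ⊤ := by
      intro hd
      exact haff (((affineSpan ℝ (S : Set Pt)).direction_eq_top_iff_of_nonempty
        ((affineSpan_nonempty ℝ).mpr hne)).mp hd)
    have hlt : (affineSpan ℝ (S : Set Pt)).direction < ⊤ := lt_top_iff_ne_top.mpr hdirne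
    have h2 := Submodule.finrank_lt (K := ℝ) (V := Pt) hdirne
    have hfr : Module.finrank ℝ Pt = 2 := by
      simp [Module.finrank_prod]
    rw [direction_affineSpan] at h2
    have h4 : Module.finrank ℝ (vectorSpan ℝ (S : Set Pt)) < 2 := by
      convert h2 using 2
      exact hfr.symm
    exact Nat.lt_succ_iff.mp h4
  obtain ⟨z, hz⟩ := hint
  obtain ⟨r, hr, hball⟩ := Metric.isOpen_iff.mp isOpen_interior z hz
  have hballP : Metric.ball z r ⊆ P := hball.trans interior_subset
  set circ : Set Pt := {u : Pt | u.1 ^ 2 + u.2 ^ 2 = 1} with hcirc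
  have key : ∀ u ∈ circ, Filter.Tendsto (fun x => (B x, C x)) (nhdsWithin u circ)
      (nhds (B u, C u)) := by
    intro u huc
    have hu : u.1 ^ 2 + u.2 ^ 2 = 1 := huc
    apply Filter.tendsto_of_subseq_tendsto
    intro ns hns
    have h1 : Filter.Tendsto ns Filter.atTop (nhds u) := hns.mono_right nhdsWithin_le_nhds
    have h2 : ∀ᶠ n in Filter.atTop, ns n ∈ circ := hns self_mem_nhdsWithin
    obtain ⟨N, hN⟩ := Filter.eventually_atTop.mp h2
    have hmem3 : ∀ n : ℕ,
        ((A (ns (n + N)), B (ns (n + N)), C (ns (n + N))) : Pt × Pt × Pt) ∈ P ×ˢ P ×ˢ P := by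
      intro n
      have h3 := (hanch (ns (n + N)) (hN _ (Nat.le_add_left N n))).1
      exact ⟨h3.1, h3.2.1, h3.2.2.1⟩
    obtain ⟨q, hqmem, φ, hφ, hconvg⟩ := (hPc.prod (hPc.prod hPc)).tendsto_subseq hmem3
    obtain ⟨astar, bstar, cstar⟩ := q
    set m : ℕ → Pt := fun n => ns (φ n + N) with hm
    have hmu : ∀ n, (m n).1 ^ 2 + (m n).2 ^ 2 = 1 := fun n => hN _ (Nat.le_add_left N (φ n))
    have hmlim : Filter.Tendsto m Filter.atTop (nhds u) :=
      h1.comp ((Filter.tendsto_add_atTop_nat N).comp hφ.tendsto_atTop)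
    have hA : Filter.Tendsto (fun n => A (m n)) Filter.atTop (nhds astar) := by
      have := (continuous_fst.tendsto (astar, bstar, cstar)).comp hconvg
      simpa [Function.comp_def] using this
    have hB : Filter.Tendsto (fun n => B (m n)) Filter.atTop (nhds bstar) := by
      have := ((continuous_fst.comp continuous_snd).tendsto (astar, bstar, cstar)).comp hconvg
      simpa [Function.comp_def] using this
    have hC : Filter.Tendsto (fun n => C (m n)) Filter.atTop (nhds cstar) := by
      have := ((continuous_snd.comp continuous_snd).tendsto (astar, bstar, cstar)).comp hconvg
      simpa [Function.comp_def] using this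
    -- the limit triangle is inscribed with outer normal u
    have hins_star : InscribedNormal P u astar bstar cstar := by
      refine ⟨?_, ?_, ?_, ?_, ?_, ?_⟩
      · exact hPcl.mem_of_tendsto hA
          (Filter.Eventually.of_forall fun n => (hanch (m n) (hmu n)).1.1)
      · exact hPcl.mem_of_tendsto hB
          (Filter.Eventually.of_forall fun n => (hanch (m n) (hmu n)).1.2.1)
      · exact hPcl.mem_of_tendsto hC
          (Filter.Eventually.of_forall fun n => (hanch (m n) (hmu n)).1.2.2.1)
      · exact le_of_tendsto_of_tendsto' tendsto_const_nhds
          (tendsto_wedge (hB.sub hA) (hC.sub hA))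
          (fun n => (hanch (m n) (hmu n)).1.2.2.2.1)
      · have hdlim := tendsto_dotp (hC.sub hB) hmlim
        have he : (fun n => dotp (C (m n) - B (m n)) (m n)) = fun _ => (0 : ℝ) :=
          funext fun n => (hanch (m n) (hmu n)).1.2.2.2.2.1
        rw [he] at hdlim
        exact (tendsto_nhds_unique hdlim tendsto_const_nhds)
      · exact le_of_tendsto_of_tendsto' (tendsto_dotp hA hmlim) (tendsto_dotp hB hmlim)
          (fun n => (hanch (m n) (hmu n)).1.2.2.2.2.2)
    -- lower semicontinuity of the maximal area
    have hklem : ∀ k : ℝ, 0 < k → k < 1 →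
        k ^ 2 * triArea (A u) (B u) (C u) ≤ triArea astar bstar cstar := by
      intro k hk0 hk1
      obtain ⟨⟨hau, hbu, hcu, hwu, hbcu, habu⟩, -⟩ := hanch u hu
      set a := A u
      set b := B u
      set c := C u
      set qq : Pt → ℕ → Pt := fun x n => z + k • rotP u (m n) (x - z) with hqq
      have htendq : ∀ x : Pt, Filter.Tendsto (fun n => qq x n) Filter.atTop
          (nhds (z + k • (x - z))) := by
        intro x
        have h4 : Filter.Tendsto (fun n => rotP u (m n) (x - z)) Filter.atTop
            (nhds (x - z)) := by
          have := tendsto_rot (u := u) (y := x - z) hmlim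
          rwa [rotP_id u (x - z) hu] at this
        exact tendsto_const_nhds.add (h4.const_smul k)
      have hq_int : ∀ x ∈ P, z + k • (x - z) ∈ interior P := by
        intro x hx
        have h5 := hconv.combo_interior_closure_mem_interior hz
          (hPcl.closure_eq ▸ hx) (by linarith : (0:ℝ) < 1 - k) hk0.le (by ring)
        have e : (1 - k) • z + k • x = z + k • (x - z) := by
          simp only [Prod.ext_iff, Prod.fst_add, Prod.snd_add, Prod.smul_fst, Prod.smul_snd,
            Prod.fst_sub, Prod.snd_sub, smul_eq_mul]
          constructor <;> ring
        rwa [e] at h5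
      have hEa : ∀ᶠ n in Filter.atTop, qq a n ∈ P :=
        ((htendq a).eventually_mem (isOpen_interior.mem_nhds (hq_int a hau))).mono
          (fun n h => interior_subset h)
      have hEb : ∀ᶠ n in Filter.atTop, qq b n ∈ P :=
        ((htendq b).eventually_mem (isOpen_interior.mem_nhds (hq_int b hbu))).mono
          (fun n h => interior_subset h)
      have hEc : ∀ᶠ n in Filter.atTop, qq c n ∈ P :=
        ((htendq c).eventually_mem (isOpen_interior.mem_nhds (hq_int c hcu))).mono
          (fun n h => interior_subset h)
      have hineq : ∀ᶠ n in Filter.atTop,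
          k ^ 2 * triArea a b c ≤ triArea (A (m n)) (B (m n)) (C (m n)) := by
        filter_upwards [hEa, hEb, hEc] with n hqa hqb hqc
        have hd : ∀ x y : Pt, qq x n - qq y n = k • rotP u (m n) (x - y) := by
          intro x y
          simp only [hqq, rotP, dotp, wedge, Prod.ext_iff, Prod.fst_sub, Prod.snd_sub,
            Prod.fst_add, Prod.snd_add, Prod.smul_fst, Prod.smul_snd, smul_eq_mul]
          constructor <;> ring
        have hdot_cb : dotp (qq c n - qq b n) (m n) = 0 := by
          rw [hd c b, dotp_smul_left, rot_dotp u (m n) (c - b) (hmu n), hbcu, mul_zero]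
        have hdot_ab : dotp (qq a n) (m n) ≤ dotp (qq b n) (m n) := by
          have e1 : dotp (qq b n - qq a n) (m n) = k * dotp (b - a) u := by
            rw [hd b a, dotp_smul_left, rot_dotp u (m n) (b - a) (hmu n)]
          have e2 : dotp (b - a) u = dotp b u - dotp a u := dotp_sub_left _ _ _
          have e3 : dotp (qq b n - qq a n) (m n)
              = dotp (qq b n) (m n) - dotp (qq a n) (m n) := dotp_sub_left _ _ _
          nlinarith [mul_nonneg hk0.le (show (0:ℝ) ≤ dotp b u - dotp a u by linarith)]
        have hwq : wedge (qq b n - qq a n) (qq c n - qq a n)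
            = k ^ 2 * wedge (b - a) (c - a) := by
          rw [hd b a, hd c a, wedge_smul, rot_wedge u (m n) (b - a) (c - a) hu (hmu n)]
        have hins : InscribedNormal P (m n) (qq a n) (qq b n) (qq c n) :=
          ⟨hqa, hqb, hqc, by rw [hwq]; positivity, hdot_cb, hdot_ab⟩
        have hle := (hanch (m n) (hmu n)).2 _ _ _ hins
        have harea_q : triArea (qq a n) (qq b n) (qq c n) = k ^ 2 * triArea a b c := by
          unfold triArea
          rw [hwq, abs_mul, abs_of_nonneg (by positivity : (0:ℝ) ≤ k ^ 2)]
          ring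
        linarith
      exact ge_of_tendsto (tendsto_triArea hA hB hC) hineq
    have harea : triArea (A u) (B u) (C u) ≤ triArea astar bstar cstar := by
      by_contra hlt
      push_neg at hlt
      have hMpos : 0 < triArea (A u) (B u) (C u) :=
        lt_of_le_of_lt (triArea_nonneg astar bstar cstar) hlt
      set M := triArea (A u) (B u) (C u) with hM
      set Q := triArea astar bstar cstar / M with hQ
      have hQ0 : 0 ≤ Q := div_nonneg (triArea_nonneg _ _ _) hMpos.le
      have hQ1 : Q < 1 := (div_lt_one hMpos).mpr hlt
      set k := Real.sqrt ((Q + 1) / 2) with hk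
      have hk0 : 0 < k := Real.sqrt_pos.mpr (by linarith)
      have hk2 : k ^ 2 = (Q + 1) / 2 := Real.sq_sqrt (by linarith)
      have hk1 : k < 1 := by
        nlinarith [hk2, hk0]
      have := hklem k hk0 hk1
      have hQM : Q * M = triArea astar bstar cstar := div_mul_cancel₀ _ hMpos.ne'
      rw [hk2] at this
      nlinarith
    have hanch_star : Anchored P u astar bstar cstar :=
      ⟨hins_star, fun a' b' c' h' => le_trans ((hanch u hu).2 a' b' c' h') harea⟩
    obtain ⟨hbeq, hceq⟩ := anchored_uniq hconv hr hballP hu (hanch u hu) hanch_star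
    refine ⟨fun n => φ n + N, ?_⟩
    rw [hbeq, hceq]
    exact hB.prodMk_nhds hC
  constructor
  · intro u huc
    exact (continuous_fst.tendsto (B u, C u)).comp (key u huc)
  · intro u huc
    exact (continuous_snd.tendsto (B u, C u)).comp (key u huc)
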